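/- If d_1·ℤ + r_1, …, d_s·ℤ + r_s is an exact covering system of ℤ, then the sum of the reciprocals 1/d_1 + ⋯ + 1/d_s equals 1. -/
import Mathlib

lemma count_residue_class (N d : ℕ) (r : ℤ) (hd : 0 < d) (hdvd : d ∣ N) :
    ((Finset.Ico (0:ℤ) (N:ℤ)).filter (fun x => (d:ℤ) ∣ x - r)).card = N / d := by
  have hd' : (0:ℤ) < (d:ℤ) := by exact_mod_cast hd
  rw [← Finset.card_range (N / d)]
  symm
  refine Finset.card_bij (fun k _ => r % d + d * k) ?_ ?_ ?_
  · intro k hk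
    simp only [Finset.mem_range] at hk
    simp only [Finset.mem_filter, Finset.mem_Ico]
    have hmod0 : 0 ≤ r % d := Int.emod_nonneg r (ne_of_gt hd')
    have hmodlt : r % d < d := Int.emod_lt_of_pos r hd'
    refine ⟨⟨by positivity, ?_⟩, ?_⟩
    · have h1 : (k : ℕ) + 1 ≤ N / d := hk
      have h2 : d * (k + 1) ≤ N := by
        calc d * (k + 1) ≤ d * (N / d) := Nat.mul_le_mul_left d h1
        _ = N := Nat.mul_div_cancel' hdvd
      have h2' : (d : ℤ) * (k + 1) ≤ (N : ℤ) := by exact_mod_cast h2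
      nlinarith
    · refine ⟨(k : ℤ) - r / d, ?_⟩
      have h := Int.mul_ediv_add_emod r d
      linear_combination h
  · intro a ha b hb hab
    have hab' : r % (d:ℤ) + (d:ℤ) * a = r % (d:ℤ) + (d:ℤ) * b := hab
    have h1 : (d:ℤ) * a = (d:ℤ) * b := by linarith
    have h2 := mul_left_cancel₀ (ne_of_gt hd') h1
    exact_mod_cast h2
  · intro x hx
    simp only [Finset.mem_filter, Finset.mem_Ico] at hx
    obtain ⟨⟨hx0, hxN⟩, hdvdx⟩ := hx
    have hmodeq : r % (d:ℤ) = x % d := Int.modEq_iff_dvd.mpr hdvdx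
    have hq0 : 0 ≤ x / (d:ℤ) := Int.ediv_nonneg hx0 (le_of_lt hd')
    refine ⟨(x / (d:ℤ)).toNat, ?_, ?_⟩
    · simp only [Finset.mem_range]
      have hlt : x / (d:ℤ) < (N / d : ℕ) := by
        rw [Int.ediv_lt_iff_lt_mul hd']
        have : ((N / d : ℕ) : ℤ) * d = N := by
          have := Nat.div_mul_cancel hdvd
          exact_mod_cast this
        rw [this]; exact hxN
      omega
    · show r % (d:ℤ) + (d:ℤ) * ((x / (d:ℤ)).toNat : ℤ) = x
      rw [Int.toNat_of_nonneg hq0]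
      have h := Int.mul_ediv_add_emod x d
      linarith [h, hmodeq]

/-- For an exact covering system of `ℤ`, the reciprocals of the moduli sum to `1`. -/
theorem exact_cover_sum_reciprocals
    (s : ℕ) (d : Fin s → ℕ) (r : Fin s → ℤ)
    (hd : ∀ i, 1 ≤ d i)
    (hpart : ∀ x : ℤ, ∃! i : Fin s, (d i : ℤ) ∣ x - r i) :
    ∑ i : Fin s, (1 : ℚ) / (d i : ℚ) = 1 := by
  classical
  set N : ℕ := ∏ i, d i with hN
  have hdpos : ∀ i, 0 < d i := fun i => hd i
  have hNpos : 0 < N := Finset.prod_pos (fun i _ => hdpos i)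
  have hdvd : ∀ i, d i ∣ N := fun i => Finset.dvd_prod_of_mem d (Finset.mem_univ i)
  choose f hf huniq using hpart
  have hfiber : ∀ i : Fin s,
      (Finset.Ico (0:ℤ) (N:ℤ)).filter (fun x => f x = i)
        = (Finset.Ico (0:ℤ) (N:ℤ)).filter (fun x => (d i : ℤ) ∣ x - r i) := by
    intro i
    ext x
    simp only [Finset.mem_filter, and_congr_right_iff]
    intro _
    constructor
    · rintro rfl; exact hf x
    · intro hx; exact (huniq x i hx).symm
  have hsum : ∑ i : Fin s, N / d i = N := by
    have := Finset.card_eq_sum_card_fiberwise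
      (f := f) (s := Finset.Ico (0:ℤ) (N:ℤ)) (t := Finset.univ)
      (fun x _ => Finset.mem_univ (f x))
    rw [Int.card_Ico] at this
    simp only [sub_zero, Int.toNat_natCast] at this
    conv_rhs => rw [this]
    refine Finset.sum_congr rfl (fun i _ => ?_)
    rw [hfiber i, count_residue_class N (d i) (r i) (hdpos i) (hdvd i)]
  have key : ∀ i, (1 : ℚ) / (d i : ℚ) = ((N / d i : ℕ) : ℚ) / (N : ℚ) := by
    intro i
    have hNd : (N / d i) * d i = N := Nat.div_mul_cancel (hdvd i)
    have hNd' : ((N / d i : ℕ) : ℚ) * (d i : ℚ) = (N : ℚ) := by exact_mod_cast hNd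
    have hdne : (d i : ℚ) ≠ 0 := by exact_mod_cast (hdpos i).ne'
    have hNne : (N : ℚ) ≠ 0 := by exact_mod_cast hNpos.ne'
    field_simp
    linarith [hNd']
  calc ∑ i : Fin s, (1 : ℚ) / (d i : ℚ)
      = ∑ i : Fin s, ((N / d i : ℕ) : ℚ) / (N : ℚ) := Finset.sum_congr rfl (fun i _ => key i)
    _ = ((∑ i : Fin s, (N / d i) : ℕ) : ℚ) / (N : ℚ) := by
        rw [← Finset.sum_div]; push_cast; ring
    _ = 1 := by rw [hsum]; exact div_self (by exact_mod_cast hNpos.ne')
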